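/- There exists c > 0 such that for every finitely supported f : ℕ×V₂ → ℂ: ‖A_{G^f} f‖_{ℓ²(ℕ×V₂, m^f)} ≤ c·‖Λ^f f‖_{ℓ²(ℕ×V₂, m^f)}, where Λ^f is the operator (Λ^f f)(x,y) = (x + 1/2)·f(x,y). -/
import Mathlib


noncomputable section

open Complex

/-- `(A_ℕ f)(n) = (i/2)·((n − 1/2)·f(n−1) − (n + 1/2)·f(n+1))`, with `f(−1) = 0`. -/
def aN (f : ℕ → ℂ) : ℕ → ℂ := fun n =>
  (I / 2) * (((n : ℂ) - 1 / 2) * (if n = 0 then 0 else f (n - 1))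
    - ((n : ℂ) + 1 / 2) * f (n + 1))

/-- The gauge transform `T_{m→m'} f = (x ↦ √(m(x)/m'(x))·f(x))`. -/
def Tw {V : Type*} (m m' : V → ℝ) (f : V → ℂ) : V → ℂ :=
  fun x => (Real.sqrt (m x / m' x) : ℂ) * f x

/-- Weight of the funnel half-line: `m₁^f(n) = eⁿ`. -/
def m1F : ℕ → ℝ := fun n => Real.exp n

/-- `A_{m₁^f} := T_{1→m₁^f} ∘ A_ℕ ∘ T_{1→m₁^f}⁻¹`. -/
def aM1F (f : ℕ → ℂ) : ℕ → ℂ :=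
  Tw (fun _ => 1) m1F (aN (Tw m1F (fun _ => 1) f))

/-- `A_{G^f} := A_{m₁^f} ⊗ 1`. -/
def aGF {V₂ : Type*} (f : ℕ × V₂ → ℂ) : ℕ × V₂ → ℂ := fun v =>
  aM1F (fun n => f (n, v.2)) v.1

/-- Weight of the funnel: `m^f(x,y) = eˣ·m₂`. -/
def mF (V₂ : Type*) (m₂ : ℝ) : ℕ × V₂ → ℝ := fun v => Real.exp v.1 * m₂

/-- The ℓ²-norm with weight `m`. -/
def nrm {V : Type*} (m : V → ℝ) (f : V → ℂ) : ℝ :=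
  Real.sqrt (∑' x : V, m x * ‖f x‖ ^ 2)

/-- `(Λ^f f)(x,y) = (x + 1/2)·f(x,y)`. -/
def lamF {V₂ : Type*} (f : ℕ × V₂ → ℂ) : ℕ × V₂ → ℂ := fun v =>
  ((v.1 : ℂ) + 1 / 2) * f v

/-! ### Auxiliary lemmas -/

lemma norm_coe_sqrt (r : ℝ) : ‖((Real.sqrt r : ℝ) : ℂ)‖ = Real.sqrt r := by
  rw [Complex.norm_real]; exact _root_.abs_of_nonneg (Real.sqrt_nonneg r)

lemma norm_I_half : ‖(I / 2 : ℂ)‖ = 1 / 2 := by simp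

lemma norm_lamF_sq {V₂ : Type*} (f : ℕ × V₂ → ℂ) (v : ℕ × V₂) :
    ‖lamF f v‖ ^ 2 = ((v.1 : ℝ) + 1 / 2) ^ 2 * ‖f v‖ ^ 2 := by
  rw [lamF, norm_mul, mul_pow,
    show ((v.1 : ℂ) + 1/2) = (((v.1 : ℝ) + 1/2 : ℝ) : ℂ) by push_cast; ring,
    Complex.norm_real, Real.norm_of_nonneg (by positivity : (0:ℝ) ≤ (v.1 : ℝ) + 1/2)]

set_option maxHeartbeats 1000000 in
lemma real_key (m₂ e0 e1 e2 p q a b b' s0 s1 s2 Z : ℝ)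
    (hm₂ : 0 ≤ m₂) (hp : 0 ≤ p) (hq : 0 ≤ q) (ha : 0 ≤ a) (hb : 0 ≤ b) (hbb' : b ≤ b')
    (hs0 : s0 ^ 2 * e0 = 1) (hs0n : 0 ≤ s0) (hs1 : s1 ^ 2 = e1) (hs2 : s2 ^ 2 = e2)
    (hs1n : 0 ≤ s1) (hs2n : 0 ≤ s2) (he0 : 0 ≤ e0)
    (hZ : 0 ≤ Z) (hZle : Z ≤ (1/2) * (a * s1 * p + b * s2 * q)) :
    e0 * m₂ * (s0 * Z) ^ 2 ≤
      (1/2) * (e1 * m₂ * (a ^ 2 * p ^ 2)) + (1/2) * (e2 * m₂ * (b' ^ 2 * q ^ 2)) := by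
  obtain ⟨X, hX⟩ : ∃ X, X = a * s1 * p := ⟨_, rfl⟩
  obtain ⟨Y, hY⟩ : ∃ Y, Y = b * s2 * q := ⟨_, rfl⟩
  have hXY : X ^ 2 = e1 * (a ^ 2 * p ^ 2) := by rw [hX, ← hs1]; ring
  have hYsq : Y ^ 2 = e2 * (b ^ 2 * q ^ 2) := by rw [hY, ← hs2]; ring
  have hXn : 0 ≤ X := by rw [hX]; positivity
  have hYn : 0 ≤ Y := by rw [hY]; positivity
  have hZle' : Z ≤ (1/2) * (X + Y) := by rw [hX, hY]; exact hZle
  have h1 : e0 * m₂ * (s0 * Z) ^ 2 ≤ e0 * m₂ * (s0 * ((1/2) * (X + Y))) ^ 2 := by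
    have h0 : s0 * Z ≤ s0 * ((1/2) * (X + Y)) := mul_le_mul_of_nonneg_left hZle' hs0n
    have h2 : (s0 * Z) ^ 2 ≤ (s0 * ((1/2) * (X + Y))) ^ 2 :=
      pow_le_pow_left₀ (by positivity) h0 2
    exact mul_le_mul_of_nonneg_left h2 (by positivity)
  have h3 : e0 * m₂ * (s0 * ((1/2) * (X + Y))) ^ 2
      = (1/4) * m₂ * (s0 ^ 2 * e0) * (X + Y) ^ 2 := by ring
  rw [hs0] at h3
  have h4 : (1/4) * m₂ * 1 * (X + Y) ^ 2 ≤ (1/2) * m₂ * (X ^ 2 + Y ^ 2) := by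
    nlinarith [mul_nonneg hm₂ (sq_nonneg (X - Y))]
  have h5 : (1/2) * m₂ * (X ^ 2 + Y ^ 2) ≤
      (1/2) * (e1 * m₂ * (a ^ 2 * p ^ 2)) + (1/2) * (e2 * m₂ * (b' ^ 2 * q ^ 2)) := by
    rw [hXY, hYsq]
    have he2 : 0 ≤ e2 := by rw [← hs2]; positivity
    have hbsq : b ^ 2 ≤ b' ^ 2 := by nlinarith
    nlinarith [mul_nonneg (mul_nonneg hm₂ he2) (sq_nonneg q)]
  linarith

lemma aN_norm_le {V₂ : Type*} (f : ℕ × V₂ → ℂ) (y : V₂) (n : ℕ) :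
    ‖aN (Tw m1F (fun _ => 1) (fun j => f (j, y))) n‖ ≤
      (1/2) * ((if n = 0 then 0 else ((n : ℝ) - 1/2)) * Real.sqrt (Real.exp (n - 1 : ℕ))
          * ‖f (n - 1, y)‖
        + ((n : ℝ) + 1/2) * Real.sqrt (Real.exp (n + 1 : ℕ)) * ‖f (n + 1, y)‖) := by
  simp only [aN, Tw, m1F, div_one]
  have hA : ‖(((n : ℂ)) - 1/2) *
      (if n = 0 then 0 else ((Real.sqrt (Real.exp (n - 1 : ℕ)) : ℝ) : ℂ) * f (n - 1, y))‖
      = (if n = 0 then 0 else ((n : ℝ) - 1/2)) * Real.sqrt (Real.exp (n - 1 : ℕ))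
        * ‖f (n - 1, y)‖ := by
    split
    · simp
    · rename_i hn
      rw [norm_mul, norm_mul, norm_coe_sqrt,
        show ((n : ℂ) - 1/2) = (((n : ℝ) - 1/2 : ℝ) : ℂ) by push_cast; ring,
        Complex.norm_real, Real.norm_of_nonneg]
      · ring
      · have : (1 : ℝ) ≤ (n : ℝ) := by exact_mod_cast Nat.one_le_iff_ne_zero.mpr hn
        linarith
  have hB : ‖((n : ℂ) + 1/2) * (((Real.sqrt (Real.exp (n + 1 : ℕ)) : ℝ) : ℂ) * f (n + 1, y))‖
      = ((n : ℝ) + 1/2) * Real.sqrt (Real.exp (n + 1 : ℕ)) * ‖f (n + 1, y)‖ := by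
    rw [norm_mul, norm_mul, norm_coe_sqrt,
      show ((n : ℂ) + 1/2) = (((n : ℝ) + 1/2 : ℝ) : ℂ) by push_cast; ring,
      Complex.norm_real, Real.norm_of_nonneg (by positivity : (0:ℝ) ≤ (n : ℝ) + 1/2)]
    ring
  calc ‖(I / 2 : ℂ) * ((((n : ℂ)) - 1/2) *
          (if n = 0 then 0 else ((Real.sqrt (Real.exp (n - 1 : ℕ)) : ℝ) : ℂ) * f (n - 1, y))
        - ((n : ℂ) + 1/2) * (((Real.sqrt (Real.exp (n + 1 : ℕ)) : ℝ) : ℂ) * f (n + 1, y)))‖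
      = (1/2) * ‖(((n : ℂ)) - 1/2) *
          (if n = 0 then 0 else ((Real.sqrt (Real.exp (n - 1 : ℕ)) : ℝ) : ℂ) * f (n - 1, y))
        - ((n : ℂ) + 1/2) * (((Real.sqrt (Real.exp (n + 1 : ℕ)) : ℝ) : ℂ) * f (n + 1, y))‖ := by
        rw [norm_mul, norm_I_half]
    _ ≤ (1/2) * (‖(((n : ℂ)) - 1/2) *
          (if n = 0 then 0 else ((Real.sqrt (Real.exp (n - 1 : ℕ)) : ℝ) : ℂ) * f (n - 1, y))‖
        + ‖((n : ℂ) + 1/2) * (((Real.sqrt (Real.exp (n + 1 : ℕ)) : ℝ) : ℂ) * f (n + 1, y))‖) := by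
        gcongr
        exact norm_sub_le _ _
    _ = _ := by rw [hA, hB]

set_option maxHeartbeats 1000000 in
lemma key {V₂ : Type*} (m₂ : ℝ) (hm₂ : 0 ≤ m₂) (f : ℕ × V₂ → ℂ) (v : ℕ × V₂) :
    mF V₂ m₂ v * ‖aGF f v‖ ^ 2 ≤
      (1/2) * (if v.1 = 0 then 0 else mF V₂ m₂ (v.1 - 1, v.2) * ‖lamF f (v.1 - 1, v.2)‖ ^ 2)
      + (1/2) * (mF V₂ m₂ (v.1 + 1, v.2) * ‖lamF f (v.1 + 1, v.2)‖ ^ 2) := by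
  obtain ⟨n, y⟩ := v
  dsimp only
  have hnorm : ‖aGF f (n, y)‖ = Real.sqrt (1 / Real.exp n) *
      ‖aN (Tw m1F (fun _ => 1) (fun j => f (j, y))) n‖ := by
    simp only [aGF, aM1F, Tw, m1F]
    rw [norm_mul, norm_coe_sqrt]
  have main := real_key m₂ (Real.exp n) (Real.exp (n - 1 : ℕ)) (Real.exp (n + 1 : ℕ))
    ‖f (n - 1, y)‖ ‖f (n + 1, y)‖
    (if n = 0 then 0 else ((n : ℝ) - 1/2)) ((n : ℝ) + 1/2) (((n + 1 : ℕ) : ℝ) + 1/2)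
    (Real.sqrt (1 / Real.exp n)) (Real.sqrt (Real.exp (n - 1 : ℕ)))
    (Real.sqrt (Real.exp (n + 1 : ℕ)))
    ‖aN (Tw m1F (fun _ => 1) (fun j => f (j, y))) n‖
    hm₂ (norm_nonneg _) (norm_nonneg _)
    (by split
        · exact le_rfl
        · rename_i hn
          have : (1 : ℝ) ≤ (n : ℝ) := by exact_mod_cast Nat.one_le_iff_ne_zero.mpr hn
          linarith)
    (by positivity)
    (by push_cast; linarith)
    (by rw [Real.sq_sqrt (by positivity)]; field_simp)
    (Real.sqrt_nonneg _)
    (Real.sq_sqrt (Real.exp_pos _).le) (Real.sq_sqrt (Real.exp_pos _).le)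
    (Real.sqrt_nonneg _) (Real.sqrt_nonneg _) (Real.exp_pos _).le
    (norm_nonneg _) (aN_norm_le f y n)
  simp only [mF, norm_lamF_sq]
  rw [hnorm]
  have h1 : 1/2 * (Real.exp ((n - 1 : ℕ)) * m₂ * ((if n = 0 then 0 else (n:ℝ) - 1/2) ^ 2
      * ‖f (n - 1, y)‖ ^ 2))
      = 1/2 * (if n = 0 then 0
          else Real.exp ((n - 1 : ℕ)) * m₂ * (((n - 1 : ℕ) : ℝ) + 1/2) ^ 2
            * ‖f (n - 1, y)‖ ^ 2) := by
    split
    · norm_num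
    · rename_i hn
      have hc : ((n - 1 : ℕ) : ℝ) = (n : ℝ) - 1 := by
        have h1n := Nat.one_le_iff_ne_zero.mpr hn
        push_cast [Nat.cast_sub h1n]
        ring
      rw [hc]; ring
  have hite : (if n = 0 then (0:ℝ)
        else Real.exp ((n - 1 : ℕ)) * m₂ * (((n - 1 : ℕ) : ℝ) + 1/2) ^ 2 * ‖f (n - 1, y)‖ ^ 2)
      = (if n = 0 then (0:ℝ)
        else Real.exp ((n - 1 : ℕ)) * m₂ * ((((n - 1 : ℕ) : ℝ) + 1/2) ^ 2 * ‖f (n - 1, y)‖ ^ 2)) := by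
    split <;> ring
  rw [hite] at h1
  linarith [main, h1.le, h1.ge]

/-- **Bound `‖A_{G^f} f‖ ≤ c·‖Λ^f f‖` on `ℓ²(ℕ×V₂, m^f)` for finitely supported
functions.** -/
theorem stmt15 {V₂ : Type*} [Fintype V₂] (m₂ : ℝ) (hm₂ : 0 < m₂) :
    ∃ c > 0, ∀ f : ℕ × V₂ → ℂ, (Function.support f).Finite →
      nrm (mF V₂ m₂) (aGF f) ≤ c * nrm (mF V₂ m₂) (lamF f) := by
  refine ⟨1, one_pos, fun f hf => ?_⟩
  set G : ℕ × V₂ → ℝ := fun v => mF V₂ m₂ v * ‖lamF f v‖ ^ 2 with hG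
  set F : ℕ × V₂ → ℝ := fun v => mF V₂ m₂ v * ‖aGF f v‖ ^ 2 with hF
  set G₁ : ℕ × V₂ → ℝ := fun v => if v.1 = 0 then 0 else G (v.1 - 1, v.2) with hG₁
  set G₂ : ℕ × V₂ → ℝ := fun v => G (v.1 + 1, v.2) with hG₂
  set i : ℕ × V₂ → ℕ × V₂ := fun v => (v.1 + 1, v.2) with hi
  have hi_inj : Function.Injective i := by
    intro a b h
    rw [hi] at h
    simp only [Prod.mk.injEq] at h
    exact Prod.ext (Nat.succ_injective h.1) h.2
  have hGnn : ∀ v, 0 ≤ G v := fun v => by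
    rw [hG]
    have : 0 ≤ mF V₂ m₂ v := mul_nonneg (Real.exp_pos _).le hm₂.le
    positivity
  have hGsupp : Function.support G ⊆ Function.support f := by
    intro v hv
    simp only [Function.mem_support] at hv ⊢
    intro h0
    apply hv
    rw [hG]
    simp [lamF, h0]
  have hGfin : (Function.support G).Finite := hf.subset hGsupp
  have hGsum : Summable G := summable_of_finite_support hGfin
  have hG₂sum : Summable G₂ := by
    refine summable_of_finite_support (Set.Finite.subset
      (Set.Finite.preimage (hi_inj.injOn) hGfin) ?_)
    intro v hv
    simp only [Function.mem_support] at hv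
    exact hv
  have hG₁sum : Summable G₁ := by
    refine summable_of_finite_support (Set.Finite.subset (hGfin.image i) ?_)
    intro v hv
    simp only [Function.mem_support, hG₁] at hv
    by_cases h0 : v.1 = 0
    · simp [h0] at hv
    · rw [if_neg h0] at hv
      refine ⟨(v.1 - 1, v.2), hv, ?_⟩
      rw [hi]
      exact Prod.ext (Nat.succ_pred_eq_of_pos (Nat.pos_of_ne_zero h0)) rfl
  have hRHSsum : Summable (fun v => (1/2) * G₁ v + (1/2) * G₂ v) :=
    (hG₁sum.mul_left _).add (hG₂sum.mul_left _)
  have hkey : ∀ v, F v ≤ (1/2) * G₁ v + (1/2) * G₂ v := fun v => key m₂ hm₂.le f v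
  have hFnn : ∀ v, 0 ≤ F v := fun v => by
    rw [hF]
    have : 0 ≤ mF V₂ m₂ v := mul_nonneg (Real.exp_pos _).le hm₂.le
    positivity
  have hFsum : Summable F := Summable.of_nonneg_of_le hFnn hkey hRHSsum
  have h1 : ∑' v, F v ≤ ∑' v, ((1/2) * G₁ v + (1/2) * G₂ v) :=
    Summable.tsum_le_tsum hkey hFsum hRHSsum
  have h2 : ∑' v, ((1/2) * G₁ v + (1/2) * G₂ v)
      = (1/2) * ∑' v, G₁ v + (1/2) * ∑' v, G₂ v := by
    rw [Summable.tsum_add (hG₁sum.mul_left _) (hG₂sum.mul_left _), tsum_mul_left, tsum_mul_left]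
  have hG₁eq : ∑' v, G₁ v = ∑' v, G v := by
    rw [← hi_inj.tsum_eq (f := G₁)]
    · refine tsum_congr fun v => ?_
      rw [hG₁, hi]
      simp only [Nat.add_sub_cancel]
      rw [if_neg (Nat.succ_ne_zero _)]
    · intro v hv
      simp only [Function.mem_support, hG₁] at hv
      by_cases h0 : v.1 = 0
      · simp [h0] at hv
      · exact ⟨(v.1 - 1, v.2),
          Prod.ext (Nat.succ_pred_eq_of_pos (Nat.pos_of_ne_zero h0)) rfl⟩
  have hG₂le : ∑' v, G₂ v ≤ ∑' v, G v :=
    Summable.tsum_le_tsum_of_inj i hi_inj (fun c _ => hGnn c) (fun v => le_of_eq rfl) hG₂sum hGsum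
  have hfinal : ∑' v, F v ≤ ∑' v, G v := by
    rw [h2, hG₁eq] at h1
    linarith
  rw [nrm, nrm, one_mul]
  exact Real.sqrt_le_sqrt hfinal
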